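/- Let α be a partial action of a monoid M on a set X with globalization Y = (M × X)/≃, where ≃ is generated by (uv, x) ∼ (u, v·x) whenever v·x is defined. If (u, x) ≃ (e, y), then u·x is defined in X and u·x = y. Consequently, the M-action on Y defined by v·[u,x] = [vu,x] restricts along i(x) = [e,x] to the original partial action on X. -/
import Mathlib


/-- The generating relation `(u*v, x) ∼ (u, v·x)` (whenever `v·x` is defined)
on `M × X`, whose generated equivalence defines the globalization. -/
def Sim {M X : Type*} [Monoid M] (α : M → X → Option X) :
    M × X → M × X → Prop := fun p q =>
  ∃ u v : M, p.1 = u * v ∧ q.1 = u ∧ α v p.2 = some q.2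

lemma sim_invariant {M X : Type*} [Monoid M] (α : M → X → Option X)
    (hmul : ∀ (u v : M) (x y : X), α v x = some y → α (u * v) x = α u y)
    {p q : M × X} (h : Relation.EqvGen (Sim α) p q) :
    α p.1 p.2 = α q.1 q.2 := by
  induction h with
  | rel p q h =>
      obtain ⟨u, v, h1, h2, h3⟩ := h
      rw [h1, h2, hmul u v p.2 q.2 h3]
  | refl => rfl
  | symm _ _ _ ih => exact ih.symm
  | trans _ _ _ _ _ ih1 ih2 => exact ih1.trans ih2

/-- If `(u, x) ≃ (e, y)` in the globalization of a partial monoid action, then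
`u·x` is defined and equal to `y`; consequently the total action
`v·[u,x] = [vu,x]` on `Y` restricts along `i(x) = [e,x]` exactly to the original
partial action (the `iff` in the second conjunct). -/
theorem stmt_4 {M X : Type*} [Monoid M] (α : M → X → Option X)
    (hunit : ∀ x, α 1 x = some x)
    (hmul : ∀ (u v : M) (x y : X), α v x = some y → α (u * v) x = α u y) :
    (∀ (u : M) (x y : X), Relation.EqvGen (Sim α) (u, x) (1, y) → α u x = some y) ∧
    (∀ (u : M) (x y : X), α u x = some y ↔ Relation.EqvGen (Sim α) (u, x) (1, y)) := by
  have key : ∀ (u : M) (x y : X), Relation.EqvGen (Sim α) (u, x) (1, y) → α u x = some y := by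
    intro u x y h
    have := sim_invariant α hmul h
    simpa [hunit] using this
  refine ⟨key, fun u x y => ⟨fun h => ?_, key u x y⟩⟩
  exact Relation.EqvGen.rel _ _ ⟨1, u, (one_mul u).symm, rfl, h⟩
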